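/- Let n ≥ 2, K ∈ ℕ, p ∈ ℤ, and let k = (k_1, k_2, k') ∈ ℕ^n with k_1 + ⋯ + k_n = K, k_1 + p ≥ k_2 + 1 and k_2 ≥ p. Assume κ^{2m} ≠ 1 for all integers m ≥ 1, and assume the genericity conditions: σ_i²/σ_j² ∉ {q^m : m ∈ ℤ} for all 2 ≤ i < j ≤ n, and σ_j²/τ_a² ∉ {q^m : m ∈ ℤ} for all j ≥ 2 and all a (with q = κ²). Then, writing φ_p(k) := (k_2 − p, k_1 + p, k'), the function σ_1 ↦ (σ_1 − κ^p σ_2) · ( X_k((σ_1,σ_2,…,σ_n);τ) + X_{φ_p(k)}((σ_1,σ_2,…,σ_n);τ) ) tends to 0 as σ_1 tends to κ^p σ_2 within ℂ∖{κ^p σ_2}; i.e., the residues of X_k and X_{φ_p(k)} at u_1 = q^p u_2 cancel. -/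

import Mathlib

open Filter Topology Finset

/-- The symmetric q-Pochhammer bracket
`⟨ζ⟩_m = ∏_{l=0}^{m-1} (κ^l ζ − κ^{−l} ζ⁻¹)`, representing `[ζ²; κ²]_m`. -/
noncomputable def br (κ ζ : ℂ) (m : ℕ) : ℂ :=
  ∏ l ∈ Finset.range m, (κ ^ l * ζ - κ ^ (-(l : ℤ)) * ζ⁻¹)

/-- The summand `X_k(σ;τ)` of the left-hand side of the duality identity,
written in terms of the square roots `σ_i` of `u_i`, `τ_a` of `v_a`,
`κ` of `q` and `ρ` of `t`. -/
noncomputable def Xsum (κ ρ : ℂ) {n : ℕ} (k : Fin n → ℕ) (σ τ : Fin n → ℂ) : ℂ :=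
  (∏ i, br κ (κ * ρ) (k i) / br κ κ (k i)) *
  (∏ i, ∏ j ∈ Finset.univ.filter (fun j => j ≠ i),
      br κ (ρ⁻¹ * κ ^ (-(k j : ℤ)) * (σ i / σ j)) (k i) /
        br κ (κ ^ (-(k j : ℤ)) * (σ i / σ j)) (k i)) *
  (∏ a, ∏ j, br κ (ρ * σ j / τ a) (k j) / br κ (σ j / τ a) (k j))

/-- The summand `Y_k(σ;τ)` of the right-hand side of the duality identity. -/
noncomputable def Ysum (κ ρ : ℂ) {n : ℕ} (k : Fin n → ℕ) (σ τ : Fin n → ℂ) : ℂ :=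
  (∏ a, br κ (κ * ρ) (k a) / br κ κ (k a)) *
  (∏ a, ∏ b ∈ Finset.univ.filter (fun b => b ≠ a),
      br κ (ρ⁻¹ * κ ^ (-(k a : ℤ)) * (τ a / τ b)) (k b) /
        br κ (κ ^ (-(k a : ℤ)) * (τ a / τ b)) (k b)) *
  (∏ a, ∏ j, br κ (ρ * σ j / τ a) (k a) / br κ (σ j / τ a) (k a))

/-- Residue cancellation at the diagonal `u_1 = q^p u_2`: on the two-sided pairing
`k ↔ φ_p(k)`, the residues of the summands `X_k` and `X_{φ_p(k)}` at `σ_1 = κ^p σ_2`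
cancel, expressed as the vanishing of the limit of
`(σ_1 − κ^p σ_2)(X_k + X_{φ_p(k)})` as `σ_1 → κ^p σ_2`. -/
noncomputable def fc (κ ζ : ℂ) (l : ℤ) : ℂ := κ ^ l * ζ - κ ^ (-l) * ζ⁻¹

noncomputable def Fp (κ ζ : ℂ) (u v : ℤ) : ℂ := ∏ l ∈ Finset.Ico u v, fc κ ζ l


lemma fc_shift {κ : ℂ} (hκ0 : κ ≠ 0) (ζ : ℂ) (d l : ℤ) :
    fc κ (κ ^ d * ζ) l = fc κ ζ (d + l) := by
  unfold fc
  rw [neg_add, zpow_add₀ hκ0 d l, zpow_add₀ hκ0 (-d) (-l), mul_inv, ← zpow_neg]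
  ring

lemma br_eq (κ ζ : ℂ) (m : ℕ) : br κ ζ m = Fp κ ζ 0 m := by
  unfold br Fp
  refine Finset.prod_nbij' (fun l => (l : ℤ)) (fun l => l.toNat) ?_ ?_ ?_ ?_ ?_
  · intro a ha; simp at ha ⊢; omega
  · intro a ha; simp at ha ⊢; omega
  · intro a _; simp
  · intro a ha; simp at ha ⊢; omega
  · intro a _; simp [fc, zpow_natCast]

lemma br_shift {κ : ℂ} (hκ0 : κ ≠ 0) (ζ : ℂ) (d : ℤ) (m : ℕ) :
    br κ (κ ^ d * ζ) m = Fp κ ζ d (d + m) := by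
  rw [br_eq]
  unfold Fp
  refine Finset.prod_nbij' (fun l => d + l) (fun l => l - d) ?_ ?_ ?_ ?_ ?_
  · intro a ha; simp at ha ⊢; omega
  · intro a ha; simp at ha ⊢; omega
  · intro a _; ring
  · intro a _; ring
  · intro a _; rw [fc_shift hκ0]

lemma Fp_concat {κ ζ : ℂ} {u v w : ℤ} (h1 : u ≤ v) (h2 : v ≤ w) :
    Fp κ ζ u v * Fp κ ζ v w = Fp κ ζ u w := by
  unfold Fp
  rw [← Finset.prod_union (Finset.Ico_disjoint_Ico_consecutive u v w),
    Finset.Ico_union_Ico_eq_Ico h1 h2]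

lemma Fp_swap {κ : ℂ} (ζ : ℂ) {u v x y : ℤ} (hux : u ≤ x) (hvx : v ≤ x) (hxy : x ≤ y) :
    Fp κ ζ u y * Fp κ ζ v x = Fp κ ζ u x * Fp κ ζ v y := by
  rw [← Fp_concat hux hxy, ← Fp_concat hvx hxy]; ring

lemma fc_reflect (κ ζ : ℂ) (l : ℤ) : fc κ ζ l = -fc κ ζ⁻¹ (-l) := by
  simp [fc]

lemma Fp_reflect (κ ζ : ℂ) {u v : ℤ} :
    Fp κ ζ u v = (-1 : ℂ) ^ ((v - u).toNat) * Fp κ ζ⁻¹ (1 - v) (1 - u) := by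
  unfold Fp
  have h : ∏ l ∈ Finset.Ico u v, fc κ ζ l
      = ∏ l ∈ Finset.Ico (1 - v) (1 - u), (-fc κ ζ⁻¹ l) := by
    refine Finset.prod_nbij' (fun l => -l) (fun l => -l) ?_ ?_ ?_ ?_ ?_
    · intro a ha; simp at ha ⊢; omega
    · intro a ha; simp at ha ⊢; omega
    · intro a _; ring
    · intro a _; ring
    · intro a _; rw [fc_reflect]
  rw [h, Finset.prod_congr rfl (fun x _ => (neg_one_mul (fc κ ζ⁻¹ x)).symm),
    Finset.prod_mul_distrib, Finset.prod_const, Int.card_Ico]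
  congr 2
  omega

-- nonvanishing
lemma fc_ne_zero {κ ζ : ℂ} (hκ0 : κ ≠ 0) (hζ : ζ ≠ 0) {l : ℤ}
    (h : ζ ^ 2 ≠ (κ ^ 2 : ℂ) ^ (-l)) : fc κ ζ l ≠ 0 := by
  intro h0
  apply h
  have h1 : κ ^ l * ζ = κ ^ (-l) * ζ⁻¹ := sub_eq_zero.mp h0
  have hkl : (κ : ℂ) ^ l ≠ 0 := zpow_ne_zero _ hκ0
  have hk2 : κ ^ l * κ ^ l = (κ ^ 2 : ℂ) ^ l := by
    rw [← zpow_natCast κ 2, ← zpow_mul, ← zpow_add₀ hκ0]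
    congr 1
    ring
  have h2 : ζ ^ 2 * ((κ ^ 2 : ℂ) ^ l) = 1 := by
    rw [← hk2]
    calc ζ ^ 2 * (κ ^ l * κ ^ l) = (κ ^ l * ζ) * (ζ * κ ^ l) := by ring
    _ = (κ ^ (-l) * ζ⁻¹) * (ζ * κ ^ l) := by rw [h1]
    _ = 1 := by rw [zpow_neg]; field_simp
  rw [zpow_neg]
  exact eq_inv_of_mul_eq_one_left (by linear_combination h2)

lemma q_zpow_ne_one {κ : ℂ} (hκ0 : κ ≠ 0) (hκ : ∀ m : ℕ, 1 ≤ m → κ ^ (2 * m) ≠ 1)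
    {m : ℤ} (hm : m ≠ 0) : (κ ^ 2 : ℂ) ^ m ≠ 1 := by
  have hpos : ∀ j : ℕ, 1 ≤ j → (κ ^ 2 : ℂ) ^ (j : ℤ) ≠ 1 := by
    intro j hj
    rw [zpow_natCast, ← pow_mul]
    exact hκ j hj
  rcases lt_or_gt_of_ne hm with h | h
  · intro he
    have : (κ ^ 2 : ℂ) ^ ((-m).toNat : ℤ) ≠ 1 := hpos _ (by omega)
    apply this
    rw [show ((-m).toNat : ℤ) = -m by omega, zpow_neg, he]
    norm_num
  · have : (κ ^ 2 : ℂ) ^ (m.toNat : ℤ) ≠ 1 := hpos _ (by omega)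
    rwa [show (m.toNat : ℤ) = m by omega] at this

lemma fc_one_ne_zero {κ : ℂ} (hκ0 : κ ≠ 0) (hκ : ∀ m : ℕ, 1 ≤ m → κ ^ (2 * m) ≠ 1)
    {l : ℤ} (hl : l ≠ 0) : fc κ 1 l ≠ 0 := by
  refine fc_ne_zero hκ0 one_ne_zero ?_
  rw [one_pow]
  exact fun h => q_zpow_ne_one hκ0 hκ (neg_ne_zero.mpr hl) h.symm

-- genericity transforms
lemma ratio_symm {κ x y : ℂ} (hκ0 : κ ≠ 0) (hx0 : x ≠ 0) (hy0 : y ≠ 0)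
    (hx : ∀ m : ℤ, x ^ 2 / y ^ 2 ≠ (κ ^ 2) ^ m) :
    ∀ m : ℤ, y ^ 2 / x ^ 2 ≠ (κ ^ 2) ^ m := by
  intro m h
  apply hx (-m)
  rw [zpow_neg, ← h, ← div_pow, ← div_pow, ← inv_pow, inv_div]

lemma shifted_sq_ne {κ x y : ℂ} (hκ0 : κ ≠ 0) (hy0 : y ≠ 0)
    (hx : ∀ m : ℤ, x ^ 2 / y ^ 2 ≠ (κ ^ 2) ^ m) (α : ℂ) (hα : α ^ 2 = 1) (d l : ℤ) :
    (α * κ ^ d * (x / y)) ^ 2 ≠ (κ ^ 2 : ℂ) ^ (-l) := by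
  intro h
  apply hx (-l - d)
  have hq0 : (κ ^ 2 : ℂ) ≠ 0 := pow_ne_zero _ hκ0
  have e1 : ((κ : ℂ) ^ d) ^ (2 : ℕ) = (κ ^ 2 : ℂ) ^ d := by
    rw [← zpow_natCast (κ ^ d) 2, ← zpow_mul, ← zpow_natCast κ 2, ← zpow_mul, mul_comm]
  have : (κ ^ 2 : ℂ) ^ d * (x ^ 2 / y ^ 2) = (κ ^ 2) ^ (-l) := by
    rw [← h, mul_pow, mul_pow, hα, div_pow, one_mul, e1]
  rw [zpow_sub₀ hq0, ← this]
  field_simp [zpow_ne_zero d hq0]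

-- continuity helpers
lemma contAt_prod {ι : Type*} {s : Finset ι} {F : ι → ℂ → ℂ} {c : ℂ}
    (h : ∀ i ∈ s, ContinuousAt (F i) c) :
    ContinuousAt (fun z => ∏ i ∈ s, F i z) c :=
  tendsto_finset_prod s h

lemma prod_erase_split {κ ζ : ℂ} {u v : ℤ} (hu : u ≤ 0) (hv : 1 ≤ v) :
    ∏ l ∈ (Finset.Ico u v).erase 0, fc κ ζ l = Fp κ ζ u 0 * Fp κ ζ 1 v := by
  have hset : (Finset.Ico u v).erase 0 = Finset.Ico u 0 ∪ Finset.Ico 1 v := by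
    ext x
    simp only [Finset.mem_erase, Finset.mem_Ico, Finset.mem_union]
    omega
  have hdisj : Disjoint (Finset.Ico u (0:ℤ)) (Finset.Ico 1 v) := by
    rw [Finset.disjoint_left]
    intro x hx hx'
    simp only [Finset.mem_Ico] at hx hx'
    omega
  rw [hset, Finset.prod_union hdisj]
  rfl

lemma Fp_one_ne_zero {κ : ℂ} (hκ0 : κ ≠ 0) (hκ : ∀ m : ℕ, 1 ≤ m → κ ^ (2 * m) ≠ 1)
    {u v : ℤ} (h : 0 < u ∨ v ≤ 0) : Fp κ 1 u v ≠ 0 := by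
  refine Finset.prod_ne_zero_iff.2 fun l hl => ?_
  simp only [Finset.mem_Ico] at hl
  exact fc_one_ne_zero hκ0 hκ (by omega)

lemma core_identity {κ ρ : ℂ} {a b a' b' : ℕ} {p δ : ℤ}
    (ha' : (a' : ℤ) = b - p) (hb' : (b' : ℤ) = a + p)
    (hδ : δ = (b' : ℤ) - b) (hd1 : 1 ≤ δ) (hpb : p ≤ (b : ℤ)) :
    (Fp κ ρ 1 ((a:ℤ)+1) / Fp κ 1 1 ((a:ℤ)+1)) * (Fp κ ρ 1 ((b:ℤ)+1) / Fp κ 1 1 ((b:ℤ)+1)) *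
      (Fp κ ρ⁻¹ (-(a':ℤ)) δ * (Fp κ 1 (-(a':ℤ)) 0 * Fp κ 1 1 δ)⁻¹) *
      (Fp κ ρ⁻¹ (-(b':ℤ)) (-δ) / Fp κ 1 (-(b':ℤ)) (-δ))
    = (Fp κ ρ 1 ((a':ℤ)+1) / Fp κ 1 1 ((a':ℤ)+1)) * (Fp κ ρ 1 ((b':ℤ)+1) / Fp κ 1 1 ((b':ℤ)+1)) *
      (Fp κ ρ⁻¹ (-(b:ℤ)) δ * (Fp κ 1 (-(b:ℤ)) 0 * Fp κ 1 1 δ)⁻¹) *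
      (Fp κ ρ⁻¹ (-(a:ℤ)) (-δ) / Fp κ 1 (-(a:ℤ)) (-δ)) := by
  have hδa : δ ≤ (a : ℤ) := by omega
  have hδb' : δ ≤ (b' : ℤ) := by omega
  -- reflections, base ρ
  have r1 : Fp κ ρ⁻¹ (-(a':ℤ)) δ
      = (-1:ℂ)^(a:ℕ) * (Fp κ ρ (1-δ) 1 * Fp κ ρ 1 ((a':ℤ)+1)) := by
    rw [Fp_reflect κ ρ⁻¹, inv_inv, show (1:ℤ) - -(a':ℤ) = (a':ℤ)+1 by ring,
      Fp_concat (by omega) (by omega), show (δ - -(a':ℤ)).toNat = a by omega]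
  have r2 : Fp κ ρ⁻¹ (-(b':ℤ)) (-δ)
      = (-1:ℂ)^(b:ℕ) * Fp κ ρ (1+δ) ((b':ℤ)+1) := by
    rw [Fp_reflect κ ρ⁻¹, inv_inv, show (1:ℤ) - -(b':ℤ) = (b':ℤ)+1 by ring,
      show (1:ℤ) - -δ = 1 + δ by ring, show (-δ - -(b':ℤ)).toNat = b by omega]
  have r3 : Fp κ ρ⁻¹ (-(b:ℤ)) δ
      = (-1:ℂ)^(b':ℕ) * (Fp κ ρ (1-δ) 1 * Fp κ ρ 1 ((b:ℤ)+1)) := by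
    rw [Fp_reflect κ ρ⁻¹, inv_inv, show (1:ℤ) - -(b:ℤ) = (b:ℤ)+1 by ring,
      Fp_concat (by omega) (by omega), show (δ - -(b:ℤ)).toNat = b' by omega]
  have r4 : Fp κ ρ⁻¹ (-(a:ℤ)) (-δ)
      = (-1:ℂ)^(a':ℕ) * Fp κ ρ (1+δ) ((a:ℤ)+1) := by
    rw [Fp_reflect κ ρ⁻¹, inv_inv, show (1:ℤ) - -(a:ℤ) = (a:ℤ)+1 by ring,
      show (1:ℤ) - -δ = 1 + δ by ring, show (-δ - -(a:ℤ)).toNat = a' by omega]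
  -- reflections, base 1
  have s1 : Fp κ 1 (-(a':ℤ)) 0 = (-1:ℂ)^(a':ℕ) * Fp κ 1 1 ((a':ℤ)+1) := by
    rw [Fp_reflect κ 1, inv_one, show (1:ℤ) - -(a':ℤ) = (a':ℤ)+1 by ring,
      show (1:ℤ) - 0 = 1 by ring, show ((0:ℤ) - -(a':ℤ)).toNat = a' by omega]
  have s2 : Fp κ 1 (-(b':ℤ)) (-δ) = (-1:ℂ)^(b:ℕ) * Fp κ 1 (1+δ) ((b':ℤ)+1) := by
    rw [Fp_reflect κ 1, inv_one, show (1:ℤ) - -(b':ℤ) = (b':ℤ)+1 by ring,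
      show (1:ℤ) - -δ = 1 + δ by ring, show (-δ - -(b':ℤ)).toNat = b by omega]
  have s3 : Fp κ 1 (-(b:ℤ)) 0 = (-1:ℂ)^(b:ℕ) * Fp κ 1 1 ((b:ℤ)+1) := by
    rw [Fp_reflect κ 1, inv_one, show (1:ℤ) - -(b:ℤ) = (b:ℤ)+1 by ring,
      show (1:ℤ) - 0 = 1 by ring, show ((0:ℤ) - -(b:ℤ)).toNat = b by omega]
  have s4 : Fp κ 1 (-(a:ℤ)) (-δ) = (-1:ℂ)^(a':ℕ) * Fp κ 1 (1+δ) ((a:ℤ)+1) := by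
    rw [Fp_reflect κ 1, inv_one, show (1:ℤ) - -(a:ℤ) = (a:ℤ)+1 by ring,
      show (1:ℤ) - -δ = 1 + δ by ring, show (-δ - -(a:ℤ)).toNat = a' by omega]
  -- splits
  have t1 : Fp κ ρ 1 ((a:ℤ)+1) = Fp κ ρ 1 (1+δ) * Fp κ ρ (1+δ) ((a:ℤ)+1) :=
    (Fp_concat (by omega) (by omega)).symm
  have t2 : Fp κ ρ 1 ((b':ℤ)+1) = Fp κ ρ 1 (1+δ) * Fp κ ρ (1+δ) ((b':ℤ)+1) :=
    (Fp_concat (by omega) (by omega)).symm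
  have u1 : Fp κ 1 1 ((a:ℤ)+1) = Fp κ 1 1 (1+δ) * Fp κ 1 (1+δ) ((a:ℤ)+1) :=
    (Fp_concat (by omega) (by omega)).symm
  have u2 : Fp κ 1 1 ((b':ℤ)+1) = Fp κ 1 1 (1+δ) * Fp κ 1 (1+δ) ((b':ℤ)+1) :=
    (Fp_concat (by omega) (by omega)).symm
  -- combined reflections
  have rr : Fp κ ρ⁻¹ (-(a':ℤ)) δ * Fp κ ρ⁻¹ (-(b':ℤ)) (-δ)
      = (-1:ℂ)^(a+b:ℕ) * (Fp κ ρ (1-δ) 1 * Fp κ ρ 1 ((a':ℤ)+1) * Fp κ ρ (1+δ) ((b':ℤ)+1)) := by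
    rw [pow_add, r1, r2]; ring
  have rr' : Fp κ ρ⁻¹ (-(b:ℤ)) δ * Fp κ ρ⁻¹ (-(a:ℤ)) (-δ)
      = (-1:ℂ)^(a+b:ℕ) * (Fp κ ρ (1-δ) 1 * Fp κ ρ 1 ((b:ℤ)+1) * Fp κ ρ (1+δ) ((a:ℤ)+1)) := by
    rw [show (a+b:ℕ) = b'+a' by omega, pow_add, r3, r4]; ring
  have ss : Fp κ 1 (-(a':ℤ)) 0 * Fp κ 1 (-(b':ℤ)) (-δ)
      = (-1:ℂ)^(a'+b:ℕ) * (Fp κ 1 1 ((a':ℤ)+1) * Fp κ 1 (1+δ) ((b':ℤ)+1)) := by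
    rw [pow_add, s1, s2]; ring
  have ss' : Fp κ 1 (-(b:ℤ)) 0 * Fp κ 1 (-(a:ℤ)) (-δ)
      = (-1:ℂ)^(a'+b:ℕ) * (Fp κ 1 1 ((b:ℤ)+1) * Fp κ 1 (1+δ) ((a:ℤ)+1)) := by
    rw [show (a'+b:ℕ) = b+a' by omega, pow_add, s3, s4]; ring
  have hNum : Fp κ ρ 1 ((a:ℤ)+1) * Fp κ ρ 1 ((b:ℤ)+1) *
        (Fp κ ρ⁻¹ (-(a':ℤ)) δ * Fp κ ρ⁻¹ (-(b':ℤ)) (-δ))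
      = Fp κ ρ 1 ((a':ℤ)+1) * Fp κ ρ 1 ((b':ℤ)+1) *
        (Fp κ ρ⁻¹ (-(b:ℤ)) δ * Fp κ ρ⁻¹ (-(a:ℤ)) (-δ)) := by
    calc Fp κ ρ 1 ((a:ℤ)+1) * Fp κ ρ 1 ((b:ℤ)+1) *
        (Fp κ ρ⁻¹ (-(a':ℤ)) δ * Fp κ ρ⁻¹ (-(b':ℤ)) (-δ))
        = ((-1:ℂ)^(a+b:ℕ) * (Fp κ ρ (1-δ) 1 * Fp κ ρ 1 ((a':ℤ)+1) * Fp κ ρ (1+δ) ((b':ℤ)+1))) *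
          ((Fp κ ρ 1 (1+δ) * Fp κ ρ (1+δ) ((a:ℤ)+1)) * Fp κ ρ 1 ((b:ℤ)+1)) := by
          rw [← rr, ← t1]; ring
      _ = ((-1:ℂ)^(a+b:ℕ) * (Fp κ ρ (1-δ) 1 * Fp κ ρ 1 ((b:ℤ)+1) * Fp κ ρ (1+δ) ((a:ℤ)+1))) *
          (Fp κ ρ 1 ((a':ℤ)+1) * (Fp κ ρ 1 (1+δ) * Fp κ ρ (1+δ) ((b':ℤ)+1))) := by ring
      _ = Fp κ ρ 1 ((a':ℤ)+1) * Fp κ ρ 1 ((b':ℤ)+1) *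
          (Fp κ ρ⁻¹ (-(b:ℤ)) δ * Fp κ ρ⁻¹ (-(a:ℤ)) (-δ)) := by
          rw [← rr', ← t2]; ring
  have hDen : Fp κ 1 1 ((a:ℤ)+1) * Fp κ 1 1 ((b:ℤ)+1) *
        (Fp κ 1 (-(a':ℤ)) 0 * Fp κ 1 1 δ) * Fp κ 1 (-(b':ℤ)) (-δ)
      = Fp κ 1 1 ((a':ℤ)+1) * Fp κ 1 1 ((b':ℤ)+1) *
        (Fp κ 1 (-(b:ℤ)) 0 * Fp κ 1 1 δ) * Fp κ 1 (-(a:ℤ)) (-δ) := by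
    calc Fp κ 1 1 ((a:ℤ)+1) * Fp κ 1 1 ((b:ℤ)+1) *
        (Fp κ 1 (-(a':ℤ)) 0 * Fp κ 1 1 δ) * Fp κ 1 (-(b':ℤ)) (-δ)
        = ((-1:ℂ)^(a'+b:ℕ) * (Fp κ 1 1 ((a':ℤ)+1) * Fp κ 1 (1+δ) ((b':ℤ)+1))) *
          ((Fp κ 1 1 (1+δ) * Fp κ 1 (1+δ) ((a:ℤ)+1)) * Fp κ 1 1 ((b:ℤ)+1) * Fp κ 1 1 δ) := by
          rw [← ss, ← u1]; ring
      _ = ((-1:ℂ)^(a'+b:ℕ) * (Fp κ 1 1 ((b:ℤ)+1) * Fp κ 1 (1+δ) ((a:ℤ)+1))) *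
          (Fp κ 1 1 ((a':ℤ)+1) * (Fp κ 1 1 (1+δ) * Fp κ 1 (1+δ) ((b':ℤ)+1)) * Fp κ 1 1 δ) := by
          ring
      _ = Fp κ 1 1 ((a':ℤ)+1) * Fp κ 1 1 ((b':ℤ)+1) *
          (Fp κ 1 (-(b:ℤ)) 0 * Fp κ 1 1 δ) * Fp κ 1 (-(a:ℤ)) (-δ) := by
          rw [← ss', ← u2]; ring
  calc (Fp κ ρ 1 ((a:ℤ)+1) / Fp κ 1 1 ((a:ℤ)+1)) * (Fp κ ρ 1 ((b:ℤ)+1) / Fp κ 1 1 ((b:ℤ)+1)) *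
      (Fp κ ρ⁻¹ (-(a':ℤ)) δ * (Fp κ 1 (-(a':ℤ)) 0 * Fp κ 1 1 δ)⁻¹) *
      (Fp κ ρ⁻¹ (-(b':ℤ)) (-δ) / Fp κ 1 (-(b':ℤ)) (-δ))
      = (Fp κ ρ 1 ((a:ℤ)+1) * Fp κ ρ 1 ((b:ℤ)+1) *
          (Fp κ ρ⁻¹ (-(a':ℤ)) δ * Fp κ ρ⁻¹ (-(b':ℤ)) (-δ))) *
        (Fp κ 1 1 ((a:ℤ)+1) * Fp κ 1 1 ((b:ℤ)+1) *
          (Fp κ 1 (-(a':ℤ)) 0 * Fp κ 1 1 δ) * Fp κ 1 (-(b':ℤ)) (-δ))⁻¹ := by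
        ring
    _ = (Fp κ ρ 1 ((a':ℤ)+1) * Fp κ ρ 1 ((b':ℤ)+1) *
          (Fp κ ρ⁻¹ (-(b:ℤ)) δ * Fp κ ρ⁻¹ (-(a:ℤ)) (-δ))) *
        (Fp κ 1 1 ((a':ℤ)+1) * Fp κ 1 1 ((b':ℤ)+1) *
          (Fp κ 1 (-(b:ℤ)) 0 * Fp κ 1 1 δ) * Fp κ 1 (-(a:ℤ)) (-δ))⁻¹ := by
        rw [hNum, hDen]
    _ = (Fp κ ρ 1 ((a':ℤ)+1) / Fp κ 1 1 ((a':ℤ)+1)) * (Fp κ ρ 1 ((b':ℤ)+1) / Fp κ 1 1 ((b':ℤ)+1)) *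
        (Fp κ ρ⁻¹ (-(b:ℤ)) δ * (Fp κ 1 (-(b:ℤ)) 0 * Fp κ 1 1 δ)⁻¹) *
        (Fp κ ρ⁻¹ (-(a:ℤ)) (-δ) / Fp κ 1 (-(a:ℤ)) (-δ)) := by
        ring

def SS (n : ℕ) : Finset (Fin (n + 2)) := (Finset.univ.erase 0).erase 1

lemma ne10 {n : ℕ} : (1 : Fin (n + 2)) ≠ 0 := by
  simp [Fin.ext_iff]

lemma SS_mem {n : ℕ} {j : Fin (n + 2)} (h : j ∈ SS n) : j ≠ 0 ∧ j ≠ 1 := by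
  simp only [SS, Finset.mem_erase, Finset.mem_univ, and_true] at h
  exact ⟨h.2, h.1⟩

lemma key0 {n : ℕ} {M : Type*} [CommMonoid M] (f : Fin (n + 2) → M) :
    ∏ i, f i = f 0 * f 1 * ∏ i ∈ SS n, f i := by
  rw [← Finset.mul_prod_erase Finset.univ f (Finset.mem_univ 0),
    ← Finset.mul_prod_erase (Finset.univ.erase 0) f
      (Finset.mem_erase.mpr ⟨ne10, Finset.mem_univ 1⟩), ← mul_assoc]
  rfl

lemma erase10 {n : ℕ} : (Finset.univ.erase (1 : Fin (n+2))).erase 0 = SS n := by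
  ext x
  simp only [SS, Finset.mem_erase, Finset.mem_univ, and_true]
  tauto

lemma eraseI {n : ℕ} {i : Fin (n+2)} (hi0 : i ≠ 0) (hi1 : i ≠ 1) :
    ((Finset.univ.erase i).erase 0).erase 1 = (SS n).erase i := by
  ext x
  simp only [SS, Finset.mem_erase, Finset.mem_univ, and_true]
  tauto

lemma key {n : ℕ} (T : Fin (n + 2) → Fin (n + 2) → ℂ) :
    ∏ i, ∏ j ∈ Finset.univ.filter (fun j => j ≠ i), T i j
    = T 0 1 * T 1 0 * (∏ j ∈ SS n, T 0 j * T 1 j) *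
      (∏ i ∈ SS n, T i 0 * T i 1) *
      (∏ i ∈ SS n, ∏ j ∈ (SS n).erase i, T i j) := by
  rw [key0 (fun i => ∏ j ∈ Finset.univ.filter (fun j => j ≠ i), T i j)]
  have hf0 : ∏ j ∈ Finset.univ.filter (fun j => j ≠ (0 : Fin (n+2))), T 0 j
      = T 0 1 * ∏ j ∈ SS n, T 0 j := by
    rw [Finset.filter_ne', ← Finset.mul_prod_erase (Finset.univ.erase 0) (T 0)
      (Finset.mem_erase.mpr ⟨ne10, Finset.mem_univ 1⟩)]
    rfl
  have hf1 : ∏ j ∈ Finset.univ.filter (fun j => j ≠ (1 : Fin (n+2))), T 1 j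
      = T 1 0 * ∏ j ∈ SS n, T 1 j := by
    rw [Finset.filter_ne', ← Finset.mul_prod_erase (Finset.univ.erase 1) (T 1)
      (Finset.mem_erase.mpr ⟨ne10.symm, Finset.mem_univ 0⟩), erase10]
  have hfi : ∀ i ∈ SS n, ∏ j ∈ Finset.univ.filter (fun j => j ≠ i), T i j
      = (T i 0 * T i 1) * ∏ j ∈ (SS n).erase i, T i j := by
    intro i hi
    obtain ⟨hi0, hi1⟩ := SS_mem hi
    rw [Finset.filter_ne', ← Finset.mul_prod_erase (Finset.univ.erase i) (T i)
      (Finset.mem_erase.mpr ⟨Ne.symm hi0, Finset.mem_univ 0⟩),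
      ← Finset.mul_prod_erase ((Finset.univ.erase i).erase 0) (T i)
      (Finset.mem_erase.mpr ⟨ne10, Finset.mem_erase.mpr ⟨Ne.symm hi1, Finset.mem_univ 1⟩⟩),
      eraseI hi0 hi1, ← mul_assoc]
  rw [hf0, hf1, Finset.prod_congr rfl hfi, Finset.prod_mul_distrib,
    Finset.prod_mul_distrib, Finset.prod_mul_distrib]
  ring

noncomputable def Ta (κ ρ : ℂ) (m : ℕ) : ℂ := br κ (κ * ρ) m / br κ κ m

noncomputable def Tt (κ ρ : ℂ) {n : ℕ} (k : Fin n → ℕ) (σ : Fin n → ℂ) (i j : Fin n) : ℂ :=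
  br κ (ρ⁻¹ * κ ^ (-(k j : ℤ)) * (σ i / σ j)) (k i) /
    br κ (κ ^ (-(k j : ℤ)) * (σ i / σ j)) (k i)

noncomputable def Tc (κ ρ : ℂ) {n : ℕ} (k : Fin n → ℕ) (σ τ : Fin n → ℂ) (a j : Fin n) : ℂ :=
  br κ (ρ * σ j / τ a) (k j) / br κ (σ j / τ a) (k j)

lemma Xsum_split (κ ρ : ℂ) {n : ℕ} (k : Fin (n+2) → ℕ) (σ τ : Fin (n+2) → ℂ) :
    Xsum κ ρ k σ τ =
      (Ta κ ρ (k 0) * Ta κ ρ (k 1) * ∏ i ∈ SS n, Ta κ ρ (k i)) *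
      (Tt κ ρ k σ 0 1 * Tt κ ρ k σ 1 0 *
        (∏ j ∈ SS n, Tt κ ρ k σ 0 j * Tt κ ρ k σ 1 j) *
        (∏ i ∈ SS n, Tt κ ρ k σ i 0 * Tt κ ρ k σ i 1) *
        (∏ i ∈ SS n, ∏ j ∈ (SS n).erase i, Tt κ ρ k σ i j)) *
      (∏ a, (Tc κ ρ k σ τ a 0 * Tc κ ρ k σ τ a 1) * ∏ j ∈ SS n, Tc κ ρ k σ τ a j) := by
  unfold Xsum
  rw [key0 (fun i => br κ (κ * ρ) (k i) / br κ κ (k i)),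
    key (fun i j => br κ (ρ⁻¹ * κ ^ (-(k j : ℤ)) * (σ i / σ j)) (k i) /
        br κ (κ ^ (-(k j : ℤ)) * (σ i / σ j)) (k i)),
    Finset.prod_congr rfl (fun a _ => key0 (fun j => br κ (ρ * σ j / τ a) (k j) /
      br κ (σ j / τ a) (k j)))]
  simp only [Ta, Tt, Tc]


lemma fc_eq_factor {κ : ℂ} (hκ0 : κ ≠ 0) (ζ : ℂ) (d : ℤ) (l : ℕ) :
    κ ^ l * (κ ^ d * ζ) - κ ^ (-(l : ℤ)) * (κ ^ d * ζ)⁻¹ = fc κ ζ (d + l) := by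
  rw [← fc_shift hκ0 ζ d l]
  simp [fc, zpow_natCast]

lemma erase_reindex {κ ζ : ℂ} (hκ0 : κ ≠ 0) {m e : ℕ} :
    ∏ l ∈ (Finset.range m).erase e,
      (κ ^ l * (κ ^ (-(e : ℤ)) * ζ) - κ ^ (-(l : ℤ)) * (κ ^ (-(e : ℤ)) * ζ)⁻¹)
    = ∏ l ∈ (Finset.Ico (-(e : ℤ)) ((m : ℤ) - e)).erase 0, fc κ ζ l := by
  refine Finset.prod_nbij' (fun l => -(e : ℤ) + l) (fun l => (l + e).toNat) ?_ ?_ ?_ ?_ ?_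
  · intro x hx; simp only [Finset.mem_erase, Finset.mem_range] at hx
    simp only [Finset.mem_erase, Finset.mem_Ico]; omega
  · intro x hx; simp only [Finset.mem_erase, Finset.mem_Ico] at hx
    simp only [Finset.mem_erase, Finset.mem_range]; omega
  · intro x hx; simp only [Finset.mem_erase, Finset.mem_range] at hx; omega
  · intro x hx; simp only [Finset.mem_erase, Finset.mem_Ico] at hx; omega
  · intro x _; exact fc_eq_factor hκ0 ζ (-(e : ℤ)) x

lemma br_gen_ne_zero {κ x y : ℂ} (hκ0 : κ ≠ 0) (hx0 : x ≠ 0) (hy0 : y ≠ 0)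
    (hxy : ∀ m : ℤ, x ^ 2 / y ^ 2 ≠ (κ ^ 2) ^ m) (d : ℤ) (m : ℕ) :
    br κ (κ ^ d * (x / y)) m ≠ 0 := by
  rw [br_shift hκ0]
  refine Finset.prod_ne_zero_iff.2 fun l _ => ?_
  refine fc_ne_zero hκ0 (div_ne_zero hx0 hy0) ?_
  rw [div_pow]
  exact hxy (-l)

lemma br_one_ne_zero {κ : ℂ} (hκ0 : κ ≠ 0) (hκ : ∀ m : ℕ, 1 ≤ m → κ ^ (2 * m) ≠ 1)
    (d : ℤ) (m : ℕ) (h : 0 < d ∨ d + m ≤ 0) : br κ (κ ^ d * 1) m ≠ 0 := by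
  rw [br_shift hκ0]
  exact Fp_one_ne_zero hκ0 hκ h

lemma contAt_br {κ : ℂ} {g : ℂ → ℂ} {c : ℂ} (hg : ContinuousAt g c) (hgc : g c ≠ 0) (m : ℕ) :
    ContinuousAt (fun z => br κ (g z) m) c := by
  unfold br
  exact contAt_prod fun l _ =>
    (continuousAt_const.mul hg).sub (continuousAt_const.mul (hg.inv₀ hgc))

lemma br_quad {κ : ℂ} (hκ0 : κ ≠ 0) (ξ : ℂ) {a b a' b' : ℕ} {p : ℤ}
    (ha' : (a' : ℤ) = b - p) (hb' : (b' : ℤ) = a + p) (hpb : p ≤ (b : ℤ))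
    (hbb' : (b : ℤ) ≤ b') :
    br κ (κ ^ p * ξ) a * br κ ξ b = br κ (κ ^ p * ξ) a' * br κ ξ b' := by
  rw [br_shift hκ0, br_shift hκ0, br_eq, br_eq,
    show p + (a : ℤ) = b' by omega, show p + (a' : ℤ) = b by omega]
  exact Fp_swap ξ hpb (by positivity) hbb'

lemma pair_quad {κ : ℂ} (hκ0 : κ ≠ 0) (ξ η : ℂ) {a b a' b' : ℕ} {p : ℤ}
    (ha' : (a' : ℤ) = b - p) (hb' : (b' : ℤ) = a + p) (hpb : p ≤ (b : ℤ))
    (hbb' : (b : ℤ) ≤ b') :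
    br κ (κ ^ p * ξ) a / br κ (κ ^ p * η) a * (br κ ξ b / br κ η b)
      = br κ (κ ^ p * ξ) a' / br κ (κ ^ p * η) a' * (br κ ξ b' / br κ η b') := by
  rw [div_mul_div_comm, div_mul_div_comm, br_quad hκ0 ξ ha' hb' hpb hbb',
    br_quad hκ0 η ha' hb' hpb hbb']


theorem X_residues_cancel_diagonal (n K : ℕ) (p : ℤ) (κ ρ : ℂ)
    (hκ0 : κ ≠ 0) (hρ0 : ρ ≠ 0)
    (hκ : ∀ m : ℕ, 1 ≤ m → κ ^ (2 * m) ≠ 1)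
    (σ τ : Fin (n + 2) → ℂ) (hσ : ∀ i : Fin (n + 2), i ≠ 0 → σ i ≠ 0)
    (hτ : ∀ a, τ a ≠ 0)
    (hσσ : ∀ i j : Fin (n + 2), i ≠ 0 → j ≠ 0 → i < j →
      ∀ m : ℤ, (σ i) ^ 2 / (σ j) ^ 2 ≠ (κ ^ 2) ^ m)
    (hστ : ∀ j : Fin (n + 2), j ≠ 0 → ∀ a : Fin (n + 2),
      ∀ m : ℤ, (σ j) ^ 2 / (τ a) ^ 2 ≠ (κ ^ 2) ^ m)
    (k : Fin (n + 2) → ℕ) (hk : (∑ i, k i) = K)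
    (h1 : (k 1 : ℤ) + 1 ≤ (k 0 : ℤ) + p) (h2 : p ≤ (k 1 : ℤ)) :
    Tendsto
      (fun z : ℂ => (z - κ ^ p * σ 1) *
        (Xsum κ ρ k (Function.update σ 0 z) τ +
         Xsum κ ρ
           (Function.update (Function.update k 0 ((k 1 : ℤ) - p).toNat) 1
             ((k 0 : ℤ) + p).toNat)
           (Function.update σ 0 z) τ))
      (𝓝[≠] (κ ^ p * σ 1)) (𝓝 0) := by

  have h10 : (1 : Fin (n + 2)) ≠ 0 := ne10
  have h01 : (0 : Fin (n + 2)) ≠ 1 := ne10.symm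
  have hs0 : σ 1 ≠ 0 := hσ 1 h10
  set c : ℂ := κ ^ p * σ 1 with hc
  have hc0 : c ≠ 0 := mul_ne_zero (zpow_ne_zero p hκ0) hs0
  set a' : ℕ := ((k 1 : ℤ) - p).toNat with ha'def
  set b' : ℕ := ((k 0 : ℤ) + p).toNat with hb'def
  have hA : (a' : ℤ) = (k 1 : ℤ) - p := Int.toNat_of_nonneg (by omega)
  have hB : (b' : ℤ) = (k 0 : ℤ) + p := Int.toNat_of_nonneg (by omega)
  set δ : ℤ := (b' : ℤ) - (k 1 : ℤ) with hδdef
  have hδ1 : 1 ≤ δ := by omega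
  have ha'lt : a' < k 0 := by omega
  have hblt : k 1 < b' := by omega
  set k' : Fin (n + 2) → ℕ := Function.update (Function.update k 0 a') 1 b' with hk'def
  have hk'0 : k' 0 = a' := by
    rw [hk'def, Function.update_of_ne h01, Function.update_self]
  have hk'1 : k' 1 = b' := by rw [hk'def, Function.update_self]
  have hk'S : ∀ j : Fin (n + 2), j ≠ 0 → j ≠ 1 → k' j = k j := by
    intro j hj0 hj1
    rw [hk'def, Function.update_of_ne hj1, Function.update_of_ne hj0]
  have hp0 : (κ : ℂ) ^ p ≠ 0 := zpow_ne_zero _ hκ0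
  have hzp : ∀ u v : ℤ, (κ : ℂ) ^ u * κ ^ v = κ ^ (u + v) := fun u v =>
    (zpow_add₀ hκ0 u v).symm
  have hcs : c / σ 1 = κ ^ p := by rw [hc, mul_div_assoc, div_self hs0, mul_one]
  have hsc : σ 1 / c = κ ^ (-p) := by
    rw [hc, mul_comm, div_mul_eq_div_div, div_self hs0, one_div, ← zpow_neg]
  -- the singular factor
  set V : ℂ → ℂ := fun z =>
    κ ^ a' * (κ ^ (-(k 1 : ℤ)) * (z / σ 1)) -
      κ ^ (-(a' : ℤ)) * (κ ^ (-(k 1 : ℤ)) * (z / σ 1))⁻¹ with hVdef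
  set W2 : ℂ → ℂ := fun z =>
    κ ^ (k 1) * (κ ^ (-(a' : ℤ)) * (σ 1 / z)) -
      κ ^ (-(k 1 : ℤ)) * (κ ^ (-(a' : ℤ)) * (σ 1 / z))⁻¹ with hW2def
  have hV1 : ∀ z : ℂ, V z = κ ^ (-p) * (z / σ 1) - κ ^ p * (σ 1 / z) := by
    intro z
    rw [hVdef]
    dsimp only
    rw [mul_inv, inv_div, zpow_neg κ (k 1 : ℤ), inv_inv, ← zpow_natCast κ a',
      show (κ : ℂ) ^ (-p) = κ ^ (a' : ℤ) * (κ ^ (k 1 : ℤ))⁻¹ by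
        rw [← zpow_neg, hzp]; congr 1; omega,
      show (κ : ℂ) ^ p = κ ^ (-(a' : ℤ)) * κ ^ (k 1 : ℤ) by
        rw [hzp]; congr 1; omega]
    ring
  have hW21 : ∀ z : ℂ, W2 z = -V z := by
    intro z
    rw [hW2def, hV1 z]
    dsimp only
    rw [mul_inv, inv_div,
      show ((κ : ℂ) ^ (-(a' : ℤ)))⁻¹ = κ ^ (a' : ℤ) by rw [← zpow_neg, neg_neg],
      ← zpow_natCast κ (k 1),
      show (κ : ℂ) ^ p = κ ^ (k 1 : ℤ) * κ ^ (-(a' : ℤ)) by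
        rw [hzp]; congr 1; omega,
      show (κ : ℂ) ^ (-p) = κ ^ (-(k 1 : ℤ)) * κ ^ (a' : ℤ) by
        rw [hzp]; congr 1; omega]
    ring
  set w : ℂ → ℂ := fun z => z * σ 1 * κ ^ p / (z + c) with hwdef
  have hwV : ∀ z : ℂ, z ≠ 0 → z + c ≠ 0 → w z * V z = z - c := by
    intro z hz hzc
    rw [hwdef]
    dsimp only
    rw [hV1 z, zpow_neg]
    rw [hc] at hzc ⊢
    have hzc' : z + σ 1 * κ ^ p ≠ 0 := by rwa [mul_comm (σ 1)]
    field_simp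
    ring
  -- eventual facts
  have hev0 : ∀ᶠ z in 𝓝[≠] c, z ≠ 0 :=
    eventually_nhdsWithin_of_eventually_nhds (eventually_ne_nhds hc0)
  have hevc : ∀ᶠ z in 𝓝[≠] c, z ≠ c := by
    filter_upwards [self_mem_nhdsWithin] with z hz using hz
  have hevnc : ∀ᶠ z in 𝓝[≠] c, z + c ≠ 0 := by
    have hcnc : c ≠ -c := fun h =>
      hc0 (add_self_eq_zero.mp (by nth_rewrite 2 [h]; ring))
    exact eventually_nhdsWithin_of_eventually_nhds
      ((eventually_ne_nhds hcnc).mono fun z hz h => hz (eq_neg_of_add_eq_zero_left h))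
  -- regular parts of the two singular brackets
  set N1 : ℂ → ℂ := fun z => br κ (ρ⁻¹ * κ ^ (-(k 1 : ℤ)) * (z / σ 1)) (k 0) with hN1def
  set U1 : ℂ → ℂ := fun z => ∏ l ∈ (Finset.range (k 0)).erase a',
      (κ ^ l * (κ ^ (-(k 1 : ℤ)) * (z / σ 1)) -
        κ ^ (-(l : ℤ)) * (κ ^ (-(k 1 : ℤ)) * (z / σ 1))⁻¹) with hU1def
  set N2 : ℂ → ℂ := fun z => br κ (ρ⁻¹ * κ ^ (-(a' : ℤ)) * (σ 1 / z)) b' with hN2def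
  set U2 : ℂ → ℂ := fun z => ∏ l ∈ (Finset.range b').erase (k 1),
      (κ ^ l * (κ ^ (-(a' : ℤ)) * (σ 1 / z)) -
        κ ^ (-(l : ℤ)) * (κ ^ (-(a' : ℤ)) * (σ 1 / z))⁻¹) with hU2def
  have hD1 : ∀ z : ℂ, br κ (κ ^ (-(k 1 : ℤ)) * (z / σ 1)) (k 0) = V z * U1 z := by
    intro z
    rw [hVdef, hU1def]
    unfold br
    dsimp only
    exact (Finset.mul_prod_erase (Finset.range (k 0)) _
      (Finset.mem_range.mpr ha'lt)).symm
  have hD2 : ∀ z : ℂ, br κ (κ ^ (-(a' : ℤ)) * (σ 1 / z)) b' = W2 z * U2 z := by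
    intro z
    rw [hW2def, hU2def]
    unfold br
    dsimp only
    exact (Finset.mul_prod_erase (Finset.range b') _
      (Finset.mem_range.mpr hblt)).symm
  -- the regularized summands
  set E1 : ℂ → ℂ := fun z =>
    (Ta κ ρ (k 0) * Ta κ ρ (k 1) * ∏ i ∈ SS n, Ta κ ρ (k i)) *
    ((N1 z * (U1 z)⁻¹) * Tt κ ρ k (Function.update σ 0 z) 1 0 *
      (∏ j ∈ SS n, Tt κ ρ k (Function.update σ 0 z) 0 j *
        Tt κ ρ k (Function.update σ 0 z) 1 j) *
      (∏ i ∈ SS n, Tt κ ρ k (Function.update σ 0 z) i 0 *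
        Tt κ ρ k (Function.update σ 0 z) i 1) *
      (∏ i ∈ SS n, ∏ j ∈ (SS n).erase i, Tt κ ρ k (Function.update σ 0 z) i j)) *
    (∏ x, (Tc κ ρ k (Function.update σ 0 z) τ x 0 *
        Tc κ ρ k (Function.update σ 0 z) τ x 1) *
      ∏ j ∈ SS n, Tc κ ρ k (Function.update σ 0 z) τ x j) with hE1def
  set E2 : ℂ → ℂ := fun z =>
    (Ta κ ρ a' * Ta κ ρ b' * ∏ i ∈ SS n, Ta κ ρ (k' i)) *
    (Tt κ ρ k' (Function.update σ 0 z) 0 1 * (N2 z * (U2 z)⁻¹) *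
      (∏ j ∈ SS n, Tt κ ρ k' (Function.update σ 0 z) 0 j *
        Tt κ ρ k' (Function.update σ 0 z) 1 j) *
      (∏ i ∈ SS n, Tt κ ρ k' (Function.update σ 0 z) i 0 *
        Tt κ ρ k' (Function.update σ 0 z) i 1) *
      (∏ i ∈ SS n, ∏ j ∈ (SS n).erase i, Tt κ ρ k' (Function.update σ 0 z) i j)) *
    (∏ x, (Tc κ ρ k' (Function.update σ 0 z) τ x 0 *
        Tc κ ρ k' (Function.update σ 0 z) τ x 1) *
      ∏ j ∈ SS n, Tc κ ρ k' (Function.update σ 0 z) τ x j) with hE2def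
  have hE1eq : ∀ᶠ z in 𝓝[≠] c,
      V z * Xsum κ ρ k (Function.update σ 0 z) τ = E1 z := by
    filter_upwards [hev0, hevc, hevnc] with z hz hzc hznc
    have hVz : V z ≠ 0 := by
      intro h0
      have hh := hwV z hz hznc
      rw [h0, mul_zero] at hh
      exact hzc (sub_eq_zero.mp hh.symm)
    have hT01 : V z * Tt κ ρ k (Function.update σ 0 z) 0 1 = N1 z * (U1 z)⁻¹ := by
      simp only [Tt, Function.update_self, Function.update_of_ne h10]
      rw [hD1 z, hN1def]
      dsimp only
      rw [div_eq_mul_inv (br κ (ρ⁻¹ * κ ^ (-(k 1 : ℤ)) * (z / σ 1)) (k 0))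
        (V z * U1 z), mul_inv]
      calc V z * (br κ (ρ⁻¹ * κ ^ (-(k 1 : ℤ)) * (z / σ 1)) (k 0) *
            ((V z)⁻¹ * (U1 z)⁻¹))
          = (V z * (V z)⁻¹) * (br κ (ρ⁻¹ * κ ^ (-(k 1 : ℤ)) * (z / σ 1)) (k 0) *
            (U1 z)⁻¹) := by ring
        _ = br κ (ρ⁻¹ * κ ^ (-(k 1 : ℤ)) * (z / σ 1)) (k 0) * (U1 z)⁻¹ := by
            rw [mul_inv_cancel₀ hVz, one_mul]
    rw [Xsum_split κ ρ k (Function.update σ 0 z) τ, hE1def]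
    dsimp only
    rw [← hT01]
    ring
  have hE2eq : ∀ᶠ z in 𝓝[≠] c,
      V z * Xsum κ ρ k' (Function.update σ 0 z) τ = -E2 z := by
    filter_upwards [hev0, hevc, hevnc] with z hz hzc hznc
    have hVz : V z ≠ 0 := by
      intro h0
      have hh := hwV z hz hznc
      rw [h0, mul_zero] at hh
      exact hzc (sub_eq_zero.mp hh.symm)
    have hT10 : N2 z * (U2 z)⁻¹ = -(V z * Tt κ ρ k' (Function.update σ 0 z) 1 0) := by
      simp only [Tt, Function.update_self, Function.update_of_ne h10, hk'0, hk'1]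
      rw [hD2 z, hN2def]
      dsimp only
      rw [div_eq_mul_inv (br κ (ρ⁻¹ * κ ^ (-(a' : ℤ)) * (σ 1 / z)) b')
        (W2 z * U2 z), mul_inv, hW21 z, inv_neg]
      calc br κ (ρ⁻¹ * κ ^ (-(a' : ℤ)) * (σ 1 / z)) b' * (U2 z)⁻¹
          = (V z * (V z)⁻¹) * (br κ (ρ⁻¹ * κ ^ (-(a' : ℤ)) * (σ 1 / z)) b' *
            (U2 z)⁻¹) := by rw [mul_inv_cancel₀ hVz, one_mul]
        _ = -(V z * (br κ (ρ⁻¹ * κ ^ (-(a' : ℤ)) * (σ 1 / z)) b' *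
            (-(V z)⁻¹ * (U2 z)⁻¹))) := by ring
    rw [Xsum_split κ ρ k' (Function.update σ 0 z) τ, hE2def]
    dsimp only
    rw [hT10, hk'0, hk'1]
    ring
  have hwc : Tendsto w (𝓝[≠] c) (𝓝 (w c)) := by
    have hcc : c + c ≠ 0 := fun h => hc0 (add_self_eq_zero.mp h)
    have : ContinuousAt w c := by
      rw [hwdef]
      exact ((continuousAt_id.mul continuousAt_const).mul continuousAt_const).div
        (continuousAt_id.add continuousAt_const) hcc
    exact this.continuousWithinAt
  -- genericity packaged
  have hjlt : ∀ j : Fin (n + 2), j ≠ 0 → j ≠ 1 → (1 : Fin (n + 2)) < j := by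
    intro j hj0 hj1
    have hv0 : (j : ℕ) ≠ 0 := fun h => hj0 (Fin.ext (by simp [h]))
    have hv1 : (j : ℕ) ≠ 1 := fun h => hj1 (Fin.ext (by simp [h]))
    rw [Fin.lt_def]
    simp only [Fin.val_one]
    omega
  have hgen1j : ∀ j : Fin (n + 2), j ≠ 0 → j ≠ 1 →
      ∀ m : ℤ, (σ 1) ^ 2 / (σ j) ^ 2 ≠ (κ ^ 2) ^ m :=
    fun j hj0 hj1 => hσσ 1 j h10 hj0 (hjlt j hj0 hj1)
  have hgenj1 : ∀ j : Fin (n + 2), j ≠ 0 → j ≠ 1 →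
      ∀ m : ℤ, (σ j) ^ 2 / (σ 1) ^ 2 ≠ (κ ^ 2) ^ m :=
    fun j hj0 hj1 => ratio_symm hκ0 hs0 (hσ j hj0) (hgen1j j hj0 hj1)
  have hbrj : ∀ j : Fin (n + 2), j ≠ 0 → j ≠ 1 → ∀ (d : ℤ) (m : ℕ),
      br κ (κ ^ d * (σ 1 / σ j)) m ≠ 0 :=
    fun j hj0 hj1 d m => br_gen_ne_zero hκ0 hs0 (hσ j hj0) (hgen1j j hj0 hj1) d m
  have hbrj' : ∀ j : Fin (n + 2), j ≠ 0 → j ≠ 1 → ∀ (d : ℤ) (m : ℕ),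
      br κ (κ ^ d * (σ j / σ 1)) m ≠ 0 :=
    fun j hj0 hj1 d m => br_gen_ne_zero hκ0 (hσ j hj0) hs0 (hgenj1 j hj0 hj1) d m
  have hbrτ : ∀ (x : Fin (n + 2)) (d : ℤ) (m : ℕ),
      br κ (κ ^ d * (σ 1 / τ x)) m ≠ 0 :=
    fun x d m => br_gen_ne_zero hκ0 hs0 (hτ x) (hστ 1 h10 x) d m
  -- constant factors
  have hTtconst : ∀ (kk : Fin (n + 2) → ℕ) (i j : Fin (n + 2)), i ≠ 0 → j ≠ 0 →
      (fun z => Tt κ ρ kk (Function.update σ 0 z) i j) = fun _ => Tt κ ρ kk σ i j := by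
    intro kk i j hi0 hj0
    funext z
    simp only [Tt, Function.update_of_ne hi0, Function.update_of_ne hj0]
  have hTcconst : ∀ (kk : Fin (n + 2) → ℕ) (x j : Fin (n + 2)), j ≠ 0 →
      (fun z => Tc κ ρ kk (Function.update σ 0 z) τ x j) = fun _ => Tc κ ρ kk σ τ x j := by
    intro kk x j hj0
    funext z
    simp only [Tc, Function.update_of_ne hj0]
  -- continuity of base maps
  have hgdiv : ∀ β γ : ℂ, ContinuousAt (fun z : ℂ => β * (z / γ)) c :=
    fun β γ => continuousAt_const.mul (continuousAt_id.div_const γ)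
  have hgdiv' : ∀ β γ : ℂ, ContinuousAt (fun z : ℂ => β * (γ / z)) c :=
    fun β γ => continuousAt_const.mul
      (ContinuousAt.div continuousAt_const continuousAt_id hc0)
  -- argument normalizations
  have hargc0 : ∀ (d : ℤ) (x : ℂ), κ ^ d * (c / x) = κ ^ (d + p) * (σ 1 / x) := by
    intro d x
    rw [hc, ← hzp]
    ring
  have hargc1 : ∀ (d : ℤ) (x : ℂ), κ ^ d * (x / c) = κ ^ (d - p) * (x / σ 1) := by
    intro d x
    rw [hc, show (κ : ℂ) ^ (d - p) = κ ^ d * (κ ^ p)⁻¹ by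
      rw [← zpow_neg, hzp]; try congr 1; try omega]
    field_simp
  have hb1 : κ ^ (-(k 1 : ℤ)) * (c / σ 1) = κ ^ (-(a' : ℤ)) * (1 : ℂ) := by
    rw [hcs, hzp, mul_one]; congr 1; omega
  have hb2 : κ ^ (-(k 0 : ℤ)) * (σ 1 / c) = κ ^ (-(b' : ℤ)) * (1 : ℂ) := by
    rw [hsc, hzp, mul_one]; congr 1; omega
  have hb3 : κ ^ (-(b' : ℤ)) * (c / σ 1) = κ ^ (-(k 0 : ℤ)) * (1 : ℂ) := by
    rw [hcs, hzp, mul_one]; congr 1; omega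
  have hb4 : κ ^ (-(a' : ℤ)) * (σ 1 / c) = κ ^ (-(k 1 : ℤ)) * (1 : ℂ) := by
    rw [hsc, hzp, mul_one]; congr 1; omega
  have hU1c : U1 c ≠ 0 := by
    rw [hU1def]
    dsimp only
    rw [hb1, erase_reindex hκ0]
    exact Finset.prod_ne_zero_iff.2 fun l hl =>
      fc_one_ne_zero hκ0 hκ (Finset.mem_erase.mp hl).1
  have hU2c : U2 c ≠ 0 := by
    rw [hU2def]
    dsimp only
    rw [hb4, erase_reindex hκ0]
    exact Finset.prod_ne_zero_iff.2 fun l hl =>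
      fc_one_ne_zero hκ0 hκ (Finset.mem_erase.mp hl).1
  have hContE1 : ContinuousAt E1 c := by
    have hNU : ContinuousAt (fun z => N1 z * (U1 z)⁻¹) c := by
      refine ContinuousAt.mul ?_ (ContinuousAt.inv₀ ?_ hU1c)
      · rw [hN1def]
        exact contAt_br (hgdiv _ _)
          (mul_ne_zero (mul_ne_zero (inv_ne_zero hρ0) (zpow_ne_zero _ hκ0))
            (div_ne_zero hc0 hs0)) (k 0)
      · rw [hU1def]
        exact contAt_prod fun l _ =>
          (continuousAt_const.mul (hgdiv _ _)).sub (continuousAt_const.mul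
            ((hgdiv _ _).inv₀ (mul_ne_zero (zpow_ne_zero _ hκ0)
              (div_ne_zero hc0 hs0))))
    have hT10c : ContinuousAt (fun z => Tt κ ρ k (Function.update σ 0 z) 1 0) c := by
      have hfeq : (fun z => Tt κ ρ k (Function.update σ 0 z) 1 0) = fun z =>
          br κ (ρ⁻¹ * κ ^ (-(k 0 : ℤ)) * (σ 1 / z)) (k 1) /
            br κ (κ ^ (-(k 0 : ℤ)) * (σ 1 / z)) (k 1) := by
        funext z
        simp only [Tt, Function.update_self, Function.update_of_ne h10]
      rw [hfeq]
      refine ContinuousAt.div (contAt_br (hgdiv' _ _) ?_ _)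
        (contAt_br (hgdiv' _ _) ?_ _) ?_
      · exact mul_ne_zero (mul_ne_zero (inv_ne_zero hρ0) (zpow_ne_zero _ hκ0))
          (div_ne_zero hs0 hc0)
      · exact mul_ne_zero (zpow_ne_zero _ hκ0) (div_ne_zero hs0 hc0)
      · rw [hb2]
        exact br_one_ne_zero hκ0 hκ _ _ (Or.inr (by omega))
    have hPJ : ContinuousAt (fun z => ∏ j ∈ SS n,
        Tt κ ρ k (Function.update σ 0 z) 0 j *
          Tt κ ρ k (Function.update σ 0 z) 1 j) c := by
      refine contAt_prod fun j hj => ?_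
      obtain ⟨hj0, hj1⟩ := SS_mem hj
      refine ContinuousAt.mul ?_ (by rw [hTtconst k 1 j h10 hj0]; exact continuousAt_const)
      have hfeq : (fun z => Tt κ ρ k (Function.update σ 0 z) 0 j) = fun z =>
          br κ (ρ⁻¹ * κ ^ (-(k j : ℤ)) * (z / σ j)) (k 0) /
            br κ (κ ^ (-(k j : ℤ)) * (z / σ j)) (k 0) := by
        funext z
        simp only [Tt, Function.update_self, Function.update_of_ne hj0]
      rw [hfeq]
      refine ContinuousAt.div (contAt_br (hgdiv _ _) ?_ _)
        (contAt_br (hgdiv _ _) ?_ _) ?_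
      · exact mul_ne_zero (mul_ne_zero (inv_ne_zero hρ0) (zpow_ne_zero _ hκ0))
          (div_ne_zero hc0 (hσ j hj0))
      · exact mul_ne_zero (zpow_ne_zero _ hκ0) (div_ne_zero hc0 (hσ j hj0))
      · rw [hargc0]
        exact hbrj j hj0 hj1 _ _
    have hPI : ContinuousAt (fun z => ∏ i ∈ SS n,
        Tt κ ρ k (Function.update σ 0 z) i 0 *
          Tt κ ρ k (Function.update σ 0 z) i 1) c := by
      refine contAt_prod fun i hi => ?_
      obtain ⟨hi0, hi1⟩ := SS_mem hi
      refine ContinuousAt.mul ?_ (by rw [hTtconst k i 1 hi0 h10]; exact continuousAt_const)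
      have hfeq : (fun z => Tt κ ρ k (Function.update σ 0 z) i 0) = fun z =>
          br κ (ρ⁻¹ * κ ^ (-(k 0 : ℤ)) * (σ i / z)) (k i) /
            br κ (κ ^ (-(k 0 : ℤ)) * (σ i / z)) (k i) := by
        funext z
        simp only [Tt, Function.update_self, Function.update_of_ne hi0]
      rw [hfeq]
      refine ContinuousAt.div (contAt_br (hgdiv' _ _) ?_ _)
        (contAt_br (hgdiv' _ _) ?_ _) ?_
      · exact mul_ne_zero (mul_ne_zero (inv_ne_zero hρ0) (zpow_ne_zero _ hκ0))
          (div_ne_zero (hσ i hi0) hc0)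
      · exact mul_ne_zero (zpow_ne_zero _ hκ0) (div_ne_zero (hσ i hi0) hc0)
      · rw [hargc1]
        exact hbrj' i hi0 hi1 _ _
    have hPSS : ContinuousAt (fun z => ∏ i ∈ SS n, ∏ j ∈ (SS n).erase i,
        Tt κ ρ k (Function.update σ 0 z) i j) c := by
      refine contAt_prod fun i hi => contAt_prod fun j hj => ?_
      rw [hTtconst k i j (SS_mem hi).1 (SS_mem (Finset.mem_of_mem_erase hj)).1]
      exact continuousAt_const
    have hCc : ContinuousAt (fun z => ∏ x,
        (Tc κ ρ k (Function.update σ 0 z) τ x 0 *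
          Tc κ ρ k (Function.update σ 0 z) τ x 1) *
        ∏ j ∈ SS n, Tc κ ρ k (Function.update σ 0 z) τ x j) c := by
      refine contAt_prod fun x _ => ContinuousAt.mul (ContinuousAt.mul ?_
        (by rw [hTcconst k x 1 h10]; exact continuousAt_const))
        (contAt_prod fun j hj => by
          rw [hTcconst k x j (SS_mem hj).1]; exact continuousAt_const)
      have hfeq : (fun z => Tc κ ρ k (Function.update σ 0 z) τ x 0) = fun z =>
          br κ (ρ * z / τ x) (k 0) / br κ (z / τ x) (k 0) := by
        funext z
        simp only [Tc, Function.update_self]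
      rw [hfeq]
      refine ContinuousAt.div
        (contAt_br ((continuousAt_const.mul continuousAt_id).div_const _) ?_ _)
        (contAt_br (continuousAt_id.div_const _) ?_ _) ?_
      · exact div_ne_zero (mul_ne_zero hρ0 hc0) (hτ x)
      · exact div_ne_zero hc0 (hτ x)
      · rw [show c / τ x = κ ^ p * (σ 1 / τ x) by rw [hc]; ring]
        exact hbrτ x p (k 0)
    rw [hE1def]
    exact (continuousAt_const.mul
      ((((hNU.mul hT10c).mul hPJ).mul hPI).mul hPSS)).mul hCc
  have hContE2 : ContinuousAt E2 c := by
    have hNU : ContinuousAt (fun z => N2 z * (U2 z)⁻¹) c := by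
      refine ContinuousAt.mul ?_ (ContinuousAt.inv₀ ?_ hU2c)
      · rw [hN2def]
        exact contAt_br (hgdiv' _ _)
          (mul_ne_zero (mul_ne_zero (inv_ne_zero hρ0) (zpow_ne_zero _ hκ0))
            (div_ne_zero hs0 hc0)) b'
      · rw [hU2def]
        exact contAt_prod fun l _ =>
          (continuousAt_const.mul (hgdiv' _ _)).sub (continuousAt_const.mul
            ((hgdiv' _ _).inv₀ (mul_ne_zero (zpow_ne_zero _ hκ0)
              (div_ne_zero hs0 hc0))))
    have hT01c : ContinuousAt (fun z => Tt κ ρ k' (Function.update σ 0 z) 0 1) c := by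
      have hfeq : (fun z => Tt κ ρ k' (Function.update σ 0 z) 0 1) = fun z =>
          br κ (ρ⁻¹ * κ ^ (-(b' : ℤ)) * (z / σ 1)) a' /
            br κ (κ ^ (-(b' : ℤ)) * (z / σ 1)) a' := by
        funext z
        simp only [Tt, Function.update_self, Function.update_of_ne h10, hk'0, hk'1]
      rw [hfeq]
      refine ContinuousAt.div (contAt_br (hgdiv _ _) ?_ _)
        (contAt_br (hgdiv _ _) ?_ _) ?_
      · exact mul_ne_zero (mul_ne_zero (inv_ne_zero hρ0) (zpow_ne_zero _ hκ0))
          (div_ne_zero hc0 hs0)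
      · exact mul_ne_zero (zpow_ne_zero _ hκ0) (div_ne_zero hc0 hs0)
      · rw [hb3]
        exact br_one_ne_zero hκ0 hκ _ _ (Or.inr (by omega))
    have hPJ : ContinuousAt (fun z => ∏ j ∈ SS n,
        Tt κ ρ k' (Function.update σ 0 z) 0 j *
          Tt κ ρ k' (Function.update σ 0 z) 1 j) c := by
      refine contAt_prod fun j hj => ?_
      obtain ⟨hj0, hj1⟩ := SS_mem hj
      refine ContinuousAt.mul ?_ (by rw [hTtconst k' 1 j h10 hj0]; exact continuousAt_const)
      have hfeq : (fun z => Tt κ ρ k' (Function.update σ 0 z) 0 j) = fun z =>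
          br κ (ρ⁻¹ * κ ^ (-(k j : ℤ)) * (z / σ j)) a' /
            br κ (κ ^ (-(k j : ℤ)) * (z / σ j)) a' := by
        funext z
        simp only [Tt, Function.update_self, Function.update_of_ne hj0, hk'0,
          hk'S j hj0 hj1]
      rw [hfeq]
      refine ContinuousAt.div (contAt_br (hgdiv _ _) ?_ _)
        (contAt_br (hgdiv _ _) ?_ _) ?_
      · exact mul_ne_zero (mul_ne_zero (inv_ne_zero hρ0) (zpow_ne_zero _ hκ0))
          (div_ne_zero hc0 (hσ j hj0))
      · exact mul_ne_zero (zpow_ne_zero _ hκ0) (div_ne_zero hc0 (hσ j hj0))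
      · rw [hargc0]
        exact hbrj j hj0 hj1 _ _
    have hPI : ContinuousAt (fun z => ∏ i ∈ SS n,
        Tt κ ρ k' (Function.update σ 0 z) i 0 *
          Tt κ ρ k' (Function.update σ 0 z) i 1) c := by
      refine contAt_prod fun i hi => ?_
      obtain ⟨hi0, hi1⟩ := SS_mem hi
      refine ContinuousAt.mul ?_ (by rw [hTtconst k' i 1 hi0 h10]; exact continuousAt_const)
      have hfeq : (fun z => Tt κ ρ k' (Function.update σ 0 z) i 0) = fun z =>
          br κ (ρ⁻¹ * κ ^ (-(a' : ℤ)) * (σ i / z)) (k i) /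
            br κ (κ ^ (-(a' : ℤ)) * (σ i / z)) (k i) := by
        funext z
        simp only [Tt, Function.update_self, Function.update_of_ne hi0, hk'0,
          hk'S i hi0 hi1]
      rw [hfeq]
      refine ContinuousAt.div (contAt_br (hgdiv' _ _) ?_ _)
        (contAt_br (hgdiv' _ _) ?_ _) ?_
      · exact mul_ne_zero (mul_ne_zero (inv_ne_zero hρ0) (zpow_ne_zero _ hκ0))
          (div_ne_zero (hσ i hi0) hc0)
      · exact mul_ne_zero (zpow_ne_zero _ hκ0) (div_ne_zero (hσ i hi0) hc0)
      · rw [hargc1]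
        exact hbrj' i hi0 hi1 _ _
    have hPSS : ContinuousAt (fun z => ∏ i ∈ SS n, ∏ j ∈ (SS n).erase i,
        Tt κ ρ k' (Function.update σ 0 z) i j) c := by
      refine contAt_prod fun i hi => contAt_prod fun j hj => ?_
      rw [hTtconst k' i j (SS_mem hi).1 (SS_mem (Finset.mem_of_mem_erase hj)).1]
      exact continuousAt_const
    have hCc : ContinuousAt (fun z => ∏ x,
        (Tc κ ρ k' (Function.update σ 0 z) τ x 0 *
          Tc κ ρ k' (Function.update σ 0 z) τ x 1) *
        ∏ j ∈ SS n, Tc κ ρ k' (Function.update σ 0 z) τ x j) c := by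
      refine contAt_prod fun x _ => ContinuousAt.mul (ContinuousAt.mul ?_
        (by rw [hTcconst k' x 1 h10]; exact continuousAt_const))
        (contAt_prod fun j hj => by
          rw [hTcconst k' x j (SS_mem hj).1]; exact continuousAt_const)
      have hfeq : (fun z => Tc κ ρ k' (Function.update σ 0 z) τ x 0) = fun z =>
          br κ (ρ * z / τ x) a' / br κ (z / τ x) a' := by
        funext z
        simp only [Tc, Function.update_self, hk'0]
      rw [hfeq]
      refine ContinuousAt.div
        (contAt_br ((continuousAt_const.mul continuousAt_id).div_const _) ?_ _)
        (contAt_br (continuousAt_id.div_const _) ?_ _) ?_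
      · exact div_ne_zero (mul_ne_zero hρ0 hc0) (hτ x)
      · exact div_ne_zero hc0 (hτ x)
      · rw [show c / τ x = κ ^ p * (σ 1 / τ x) by rw [hc]; ring]
        exact hbrτ x p a'
    rw [hE2def]
    exact (continuousAt_const.mul
      ((((hT01c.mul hNU).mul hPJ).mul hPI).mul hPSS)).mul hCc
  have hkey : E2 c = E1 c := by
    -- conversions of the core pieces into Fp form
    have cTa : ∀ m : ℕ, Ta κ ρ m = Fp κ ρ 1 (1 + (m : ℤ)) / Fp κ 1 1 (1 + (m : ℤ)) := by
      intro m
      have n1 := br_shift hκ0 ρ 1 m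
      rw [zpow_one] at n1
      have n2 := br_shift hκ0 1 1 m
      rw [zpow_one, mul_one] at n2
      rw [Ta, n1, n2]
    have cN1 : N1 c = Fp κ ρ⁻¹ (-(a' : ℤ)) δ := by
      rw [hN1def]
      dsimp only
      rw [show ρ⁻¹ * κ ^ (-(k 1 : ℤ)) * (c / σ 1) = κ ^ (-(a' : ℤ)) * ρ⁻¹ by
          rw [hcs, mul_assoc, hzp, show (-(k 1 : ℤ) + p) = -(a' : ℤ) from by omega,
            mul_comm],
        br_shift hκ0, show (-(a' : ℤ) + (k 0 : ℤ)) = δ from by omega]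
    have cU1 : U1 c = Fp κ 1 (-(a' : ℤ)) 0 * Fp κ 1 1 δ := by
      rw [hU1def]
      dsimp only
      rw [hb1, erase_reindex hκ0, show ((k 0 : ℤ) - (a' : ℤ)) = δ from by omega]
      exact prod_erase_split (by omega) (by omega)
    have cT10 : Tt κ ρ k (Function.update σ 0 c) 1 0
        = Fp κ ρ⁻¹ (-(b' : ℤ)) (-δ) / Fp κ 1 (-(b' : ℤ)) (-δ) := by
      simp only [Tt, Function.update_self, Function.update_of_ne h10]
      rw [show ρ⁻¹ * κ ^ (-(k 0 : ℤ)) * (σ 1 / c) = κ ^ (-(b' : ℤ)) * ρ⁻¹ by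
          rw [hsc, mul_assoc, hzp, show (-(k 0 : ℤ) + -p) = -(b' : ℤ) from by omega,
            mul_comm],
        hb2, br_shift hκ0, br_shift hκ0,
        show (-(b' : ℤ) + (k 1 : ℤ)) = -δ from by omega]
    have cT01 : Tt κ ρ k' (Function.update σ 0 c) 0 1
        = Fp κ ρ⁻¹ (-(k 0 : ℤ)) (-δ) / Fp κ 1 (-(k 0 : ℤ)) (-δ) := by
      simp only [Tt, Function.update_self, Function.update_of_ne h10, hk'0, hk'1]
      rw [show ρ⁻¹ * κ ^ (-(b' : ℤ)) * (c / σ 1) = κ ^ (-(k 0 : ℤ)) * ρ⁻¹ by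
          rw [hcs, mul_assoc, hzp, show (-(b' : ℤ) + p) = -(k 0 : ℤ) from by omega,
            mul_comm],
        hb3, br_shift hκ0, br_shift hκ0,
        show (-(k 0 : ℤ) + (a' : ℤ)) = -δ from by omega]
    have cN2 : N2 c = Fp κ ρ⁻¹ (-(k 1 : ℤ)) δ := by
      rw [hN2def]
      dsimp only
      rw [show ρ⁻¹ * κ ^ (-(a' : ℤ)) * (σ 1 / c) = κ ^ (-(k 1 : ℤ)) * ρ⁻¹ by
          rw [hsc, mul_assoc, hzp, show (-(a' : ℤ) + -p) = -(k 1 : ℤ) from by omega,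
            mul_comm],
        br_shift hκ0, show (-(k 1 : ℤ) + (b' : ℤ)) = δ from by omega]
    have cU2 : U2 c = Fp κ 1 (-(k 1 : ℤ)) 0 * Fp κ 1 1 δ := by
      rw [hU2def]
      dsimp only
      rw [hb4, erase_reindex hκ0, show ((b' : ℤ) - (k 1 : ℤ)) = δ from by omega]
      exact prod_erase_split (by omega) (by omega)
    have hCore : Ta κ ρ a' * Ta κ ρ b' *
          (Tt κ ρ k' (Function.update σ 0 c) 0 1 * (N2 c * (U2 c)⁻¹))
        = Ta κ ρ (k 0) * Ta κ ρ (k 1) *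
          ((N1 c * (U1 c)⁻¹) * Tt κ ρ k (Function.update σ 0 c) 1 0) := by
      rw [cTa, cTa, cTa, cTa, cN1, cU1, cT10, cT01, cN2, cU2,
        show (1 + (k 0 : ℤ)) = ((k 0 : ℤ) + 1) from by ring,
        show (1 + (k 1 : ℤ)) = ((k 1 : ℤ) + 1) from by ring,
        show (1 + (a' : ℤ)) = ((a' : ℤ) + 1) from by ring,
        show (1 + (b' : ℤ)) = ((b' : ℤ) + 1) from by ring]
      have CI := core_identity (κ := κ) (ρ := ρ) hA hB hδdef hδ1 h2
      linear_combination -CI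
    -- matching of the regular pieces
    have hAS : ∏ i ∈ SS n, Ta κ ρ (k' i) = ∏ i ∈ SS n, Ta κ ρ (k i) :=
      Finset.prod_congr rfl fun i hi => by
        rw [hk'S i (SS_mem hi).1 (SS_mem hi).2]
    have hPSS : ∏ i ∈ SS n, ∏ j ∈ (SS n).erase i,
          Tt κ ρ k' (Function.update σ 0 c) i j
        = ∏ i ∈ SS n, ∏ j ∈ (SS n).erase i,
          Tt κ ρ k (Function.update σ 0 c) i j :=
      Finset.prod_congr rfl fun i hi => Finset.prod_congr rfl fun j hj => by
        have hi' := SS_mem hi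
        have hj' := SS_mem (Finset.mem_of_mem_erase hj)
        simp only [Tt, hk'S i hi'.1 hi'.2, hk'S j hj'.1 hj'.2]
    have hPJ : ∏ j ∈ SS n, Tt κ ρ k' (Function.update σ 0 c) 0 j *
          Tt κ ρ k' (Function.update σ 0 c) 1 j
        = ∏ j ∈ SS n, Tt κ ρ k (Function.update σ 0 c) 0 j *
          Tt κ ρ k (Function.update σ 0 c) 1 j :=
      Finset.prod_congr rfl fun j hj => by
        obtain ⟨hj0, hj1⟩ := SS_mem hj
        simp only [Tt, Function.update_self, Function.update_of_ne h10,
          Function.update_of_ne hj0, hk'0, hk'1, hk'S j hj0 hj1]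
        rw [show ρ⁻¹ * κ ^ (-(k j : ℤ)) * (c / σ j)
              = κ ^ p * (ρ⁻¹ * κ ^ (-(k j : ℤ)) * (σ 1 / σ j)) by rw [hc]; ring,
          show κ ^ (-(k j : ℤ)) * (c / σ j)
              = κ ^ p * (κ ^ (-(k j : ℤ)) * (σ 1 / σ j)) by rw [hc]; ring]
        exact (pair_quad hκ0 _ _ hA hB h2 (by omega)).symm
    have hPI : ∏ i ∈ SS n, Tt κ ρ k' (Function.update σ 0 c) i 0 *
          Tt κ ρ k' (Function.update σ 0 c) i 1
        = ∏ i ∈ SS n, Tt κ ρ k (Function.update σ 0 c) i 0 *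
          Tt κ ρ k (Function.update σ 0 c) i 1 :=
      Finset.prod_congr rfl fun i hi => by
        obtain ⟨hi0, hi1⟩ := SS_mem hi
        simp only [Tt, Function.update_self, Function.update_of_ne hi0,
          Function.update_of_ne h10, hk'0, hk'1, hk'S i hi0 hi1]
        have f1 : κ ^ (-(a' : ℤ)) * (σ i / c) = κ ^ (-(k 1 : ℤ)) * (σ i / σ 1) := by
          rw [hargc1, show (-(a' : ℤ) - p) = -(k 1 : ℤ) from by omega]
        have f2 : ρ⁻¹ * κ ^ (-(a' : ℤ)) * (σ i / c)
            = ρ⁻¹ * κ ^ (-(k 1 : ℤ)) * (σ i / σ 1) := by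
          rw [mul_assoc, mul_assoc, f1]
        have g1 : κ ^ (-(b' : ℤ)) * (σ i / σ 1) = κ ^ (-(k 0 : ℤ)) * (σ i / c) := by
          rw [hargc1, show (-(k 0 : ℤ) - p) = -(b' : ℤ) from by omega]
        have g2 : ρ⁻¹ * κ ^ (-(b' : ℤ)) * (σ i / σ 1)
            = ρ⁻¹ * κ ^ (-(k 0 : ℤ)) * (σ i / c) := by
          rw [mul_assoc, mul_assoc, g1]
        rw [f1, f2, g1, g2]
        ring
    have hC : (∏ x, (Tc κ ρ k' (Function.update σ 0 c) τ x 0 *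
            Tc κ ρ k' (Function.update σ 0 c) τ x 1) *
          ∏ j ∈ SS n, Tc κ ρ k' (Function.update σ 0 c) τ x j)
        = ∏ x, (Tc κ ρ k (Function.update σ 0 c) τ x 0 *
            Tc κ ρ k (Function.update σ 0 c) τ x 1) *
          ∏ j ∈ SS n, Tc κ ρ k (Function.update σ 0 c) τ x j :=
      Finset.prod_congr rfl fun x _ => by
        have hpair : Tc κ ρ k' (Function.update σ 0 c) τ x 0 *
              Tc κ ρ k' (Function.update σ 0 c) τ x 1
            = Tc κ ρ k (Function.update σ 0 c) τ x 0 *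
              Tc κ ρ k (Function.update σ 0 c) τ x 1 := by
          simp only [Tc, Function.update_self, Function.update_of_ne h10, hk'0, hk'1]
          rw [show ρ * c / τ x = κ ^ p * (ρ * σ 1 / τ x) by rw [hc]; ring,
            show c / τ x = κ ^ p * (σ 1 / τ x) by rw [hc]; ring]
          exact (pair_quad hκ0 _ _ hA hB h2 (by omega)).symm
        have hrest : ∏ j ∈ SS n, Tc κ ρ k' (Function.update σ 0 c) τ x j
            = ∏ j ∈ SS n, Tc κ ρ k (Function.update σ 0 c) τ x j :=
          Finset.prod_congr rfl fun j hj => by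
            simp only [Tc, hk'S j (SS_mem hj).1 (SS_mem hj).2]
        rw [hpair, hrest]
    rw [hE1def, hE2def]
    dsimp only
    rw [hAS, hPSS, hPJ, hPI, hC]
    linear_combination ((∏ i ∈ SS n, Ta κ ρ (k i)) *
      ((∏ j ∈ SS n, Tt κ ρ k (Function.update σ 0 c) 0 j *
          Tt κ ρ k (Function.update σ 0 c) 1 j) *
        (∏ i ∈ SS n, Tt κ ρ k (Function.update σ 0 c) i 0 *
          Tt κ ρ k (Function.update σ 0 c) i 1) *
        (∏ i ∈ SS n, ∏ j ∈ (SS n).erase i, Tt κ ρ k (Function.update σ 0 c) i j) *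
        (∏ x, (Tc κ ρ k (Function.update σ 0 c) τ x 0 *
            Tc κ ρ k (Function.update σ 0 c) τ x 1) *
          ∏ j ∈ SS n, Tc κ ρ k (Function.update σ 0 c) τ x j))) * hCore
  have hT1 : Tendsto (fun z => V z * Xsum κ ρ k (Function.update σ 0 z) τ)
      (𝓝[≠] c) (𝓝 (E1 c)) :=
    Tendsto.congr' (Filter.EventuallyEq.symm hE1eq) hContE1.continuousWithinAt
  have hT2 : Tendsto (fun z => V z * Xsum κ ρ k' (Function.update σ 0 z) τ)
      (𝓝[≠] c) (𝓝 (-E2 c)) :=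
    Tendsto.congr' (Filter.EventuallyEq.symm hE2eq) hContE2.neg.continuousWithinAt
  have hfin := hwc.mul (hT1.add hT2)
  rw [hkey, add_neg_cancel, mul_zero] at hfin
  refine Tendsto.congr' ?_ hfin
  filter_upwards [hev0, hevc, hevnc] with z hz hzc hznc
  rw [← hwV z hz hznc]
  ring
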